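/- Let k, t, n be integers with k odd and 0 < k <= 2t+1 <= n. Then there exists a (t+1)-geodesic P in H_n such that inst(maj_t(k), P) >= 2t+1 and such that maj_t(k) assigns colour 0 to the last point of P. In particular, inst(maj_t(k)) >= 2t+1. -/

import Mathlib

open Finset

/-- The number of entries of a point of the hypercube equal to `1` (`true`). -/
def onesCount {n : ℕ} (x : Fin n → Bool) : ℕ :=
  (univ.filter fun i => x i = true).card

/-- The number of entries of a point of the hypercube equal to `0` (`false`). -/
def zerosCount {n : ℕ} (x : Fin n → Bool) : ℕ :=
  (univ.filter fun i => x i = false).card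

/-- `P` is a geodesic in the `n`-hypercube: consecutive points differ in exactly one
entry, and each of the `n` entries changes at exactly one step. -/
def IsGeodesic {n : ℕ} (P : Fin (n+1) → Fin n → Bool) : Prop :=
  ∃ σ : Equiv.Perm (Fin n), ∀ j : Fin n, ∀ ℓ : Fin n,
    P j.succ ℓ = if σ ℓ = j then !(P j.castSucc ℓ) else P j.castSucc ℓ

/-- The number of jumps of the geodesic `P` in the colouring `f`. -/
def jumps {n : ℕ} (f : (Fin n → Bool) → Bool) (P : Fin (n+1) → Fin n → Bool) : ℕ :=
  (univ.filter fun j : Fin n => f (P j.succ) ≠ f (P j.castSucc)).card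

/-- `inst f` is the maximum of `jumps f P` over all geodesics `P`. -/
noncomputable def inst {n : ℕ} (f : (Fin n → Bool) → Bool) : ℕ :=
  sSup {m | ∃ P : Fin (n+1) → Fin n → Bool, IsGeodesic P ∧ m = jumps f P}

/-- The number of `1`s among the first `k` entries of `x`. -/
def firstOnes {n : ℕ} (k : ℕ) (x : Fin n → Bool) : ℕ :=
  (univ.filter fun i : Fin n => i.val < k ∧ x i = true).card

/-- The majority colouring `maj_t(k)` (for odd `k`): canonically `0` on `B_t(0^n)`,
`1` on `B_t(1^n)`, and elsewhere the majority colour of the first `k` entries. -/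
def maj {n : ℕ} (t k : ℕ) (x : Fin n → Bool) : Bool :=
  if onesCount x ≤ t then false
  else if zerosCount x ≤ t then true
  else decide (k < 2 * firstOnes k x)

/-! ### Auxiliary machinery for the explicit geodesic -/

/-- The step at which coordinate `ℓ` flips. -/
def sig (s t : ℕ) (ℓ : ℕ) : ℕ :=
  if ℓ < s then 2*ℓ
  else if ℓ = s then 2*t
  else if ℓ ≤ 2*s then 2*ℓ - (2*s+1)
  else if ℓ ≤ s+t then 2*ℓ - (2*s+2)
  else if ℓ ≤ 2*t then 2*ℓ - (2*t+1)
  else ℓ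

/-- The coordinate flipped at step `m` (inverse of `sig`). -/
def tau (s t : ℕ) (m : ℕ) : ℕ :=
  if m < 2*t ∧ m < 2*s then (if m % 2 = 0 then m/2 else s+1+m/2)
  else if m < 2*t then (if m % 2 = 0 then s+1+m/2 else t+1+m/2)
  else if m = 2*t then s
  else m

/-- The starting point of the geodesic. -/
def x0f (s t : ℕ) (ℓ : ℕ) : Bool := decide (ℓ ≤ s ∨ (2*s+1 ≤ ℓ ∧ ℓ ≤ s+t))

lemma tau_sig {s t : ℕ} (hst : s ≤ t) (ℓ : ℕ) : tau s t (sig s t ℓ) = ℓ := by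
  unfold sig tau; split_ifs <;> omega

lemma sig_tau {s t : ℕ} (hst : s ≤ t) (m : ℕ) : sig s t (tau s t m) = m := by
  unfold sig tau; split_ifs <;> omega

lemma sig_lt {n s t : ℕ} (hst : s ≤ t) (hn : 2*t+1 ≤ n) {ℓ : ℕ} (h : ℓ < n) :
    sig s t ℓ < n := by
  unfold sig; split_ifs <;> omega

lemma tau_lt {n s t : ℕ} (hst : s ≤ t) (hn : 2*t+1 ≤ n) {m : ℕ} (h : m < n) :
    tau s t m < n := by
  unfold tau; split_ifs <;> omega

lemma x0f_tau {s t : ℕ} (hst : s ≤ t) (m : ℕ) :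
    x0f s t (tau s t m) = true ↔ (m % 2 = 0 ∧ m ≤ 2*t) := by
  unfold x0f tau; split_ifs <;> simp only [decide_eq_true_eq] <;> omega

lemma tau_lt_k {s t : ℕ} (hst : s ≤ t) (m : ℕ) :
    tau s t m < 2*s+1 ↔ (m < 2*s ∨ m = 2*t) := by
  unfold tau; split_ifs <;> omega

lemma card_filter_fin (n : ℕ) (p : ℕ → Prop) [DecidablePred p] :
    (univ.filter fun i : Fin n => p i.val).card = ((Finset.range n).filter p).card := by
  rw [Finset.card_filter, Finset.card_filter,
    Fin.sum_univ_eq_sum_range (fun m => if p m then 1 else 0)]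

lemma counts_sum {n : ℕ} (x : Fin n → Bool) : onesCount x + zerosCount x = n := by
  classical
  have := Finset.card_filter_add_card_filter_not
    (s := (univ : Finset (Fin n))) (p := fun i => x i = true)
  simpa [onesCount, zerosCount, Finset.card_univ, Bool.not_eq_true] using this

lemma flip_card_none {n : ℕ} (q : Fin n → Prop) [DecidablePred q] (x y : Fin n → Bool)
    (ℓ0 : Fin n) (hagree : ∀ ℓ, ℓ ≠ ℓ0 → y ℓ = x ℓ) (hq : ¬ q ℓ0) :
    (univ.filter fun i => q i ∧ y i = true).card
      = (univ.filter fun i => q i ∧ x i = true).card := by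
  congr 1
  ext i; simp only [mem_filter, mem_univ, true_and]
  by_cases h : i = ℓ0
  · subst h; tauto
  · rw [hagree i h]

lemma flip_card_down {n : ℕ} (q : Fin n → Prop) [DecidablePred q] (x y : Fin n → Bool)
    (ℓ0 : Fin n) (hagree : ∀ ℓ, ℓ ≠ ℓ0 → y ℓ = x ℓ) (hq : q ℓ0)
    (hx : x ℓ0 = true) (hy : y ℓ0 = false) :
    (univ.filter fun i => q i ∧ y i = true).card + 1
      = (univ.filter fun i => q i ∧ x i = true).card := by
  have hmem : ℓ0 ∈ univ.filter fun i => q i ∧ x i = true :=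
    mem_filter.2 ⟨mem_univ _, hq, hx⟩
  have hset : (univ.filter fun i => q i ∧ y i = true)
      = (univ.filter fun i => q i ∧ x i = true).erase ℓ0 := by
    ext i
    simp only [mem_erase, mem_filter, mem_univ, true_and]
    by_cases h : i = ℓ0
    · subst h; simp [hy]
    · rw [hagree i h]; simp [h]
  rw [hset, Finset.card_erase_add_one hmem]

lemma flip_card_up {n : ℕ} (q : Fin n → Prop) [DecidablePred q] (x y : Fin n → Bool)
    (ℓ0 : Fin n) (hagree : ∀ ℓ, ℓ ≠ ℓ0 → y ℓ = x ℓ) (hq : q ℓ0)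
    (hx : x ℓ0 = false) (hy : y ℓ0 = true) :
    (univ.filter fun i => q i ∧ x i = true).card + 1
      = (univ.filter fun i => q i ∧ y i = true).card :=
  flip_card_down q y x ℓ0 (fun ℓ h => (hagree ℓ h).symm) hq hy hx

/-- The points of the geodesic, as a function of the step number. -/
def Xp (n s t m : ℕ) (ℓ : Fin n) : Bool :=
  xor (x0f s t ℓ.val) (decide (sig s t ℓ.val < m))

lemma Xp_zero {n s t : ℕ} (ℓ : Fin n) : Xp n s t 0 ℓ = x0f s t ℓ.val := by
  simp [Xp]

lemma ones_zero {n s t : ℕ} (hst : s ≤ t) (hn : 2*t+1 ≤ n) :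
    onesCount (Xp n s t 0) = t + 1 := by
  unfold onesCount
  have h1 : (univ.filter fun i : Fin n => Xp n s t 0 i = true)
      = univ.filter fun i : Fin n => (fun v => x0f s t v = true) i.val := by
    simp [Xp_zero]
  rw [h1]
  refine (card_filter_fin n (fun v => x0f s t v = true)).trans ?_
  have h2 : ((Finset.range n).filter fun v => x0f s t v = true)
      = Finset.range (s+1) ∪ Finset.Icc (2*s+1) (s+t) := by
    ext a
    simp only [mem_filter, mem_range, mem_union, mem_Icc, x0f, decide_eq_true_eq]
    omega
  rw [h2, Finset.card_union_of_disjoint, Finset.card_range, Nat.card_Icc]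
  · omega
  · rw [Finset.disjoint_left]
    intro a ha hb
    simp only [mem_range] at ha
    simp only [mem_Icc] at hb
    omega

lemma first_zero {n s t : ℕ} (hst : s ≤ t) (hn : 2*t+1 ≤ n) :
    firstOnes (2*s+1) (Xp n s t 0) = s + 1 := by
  unfold firstOnes
  have h1 : (univ.filter fun i : Fin n => i.val < 2*s+1 ∧ Xp n s t 0 i = true)
      = univ.filter fun i : Fin n => (fun v => v < 2*s+1 ∧ x0f s t v = true) i.val := by
    simp [Xp_zero]
  rw [h1]
  refine (card_filter_fin n (fun v => v < 2*s+1 ∧ x0f s t v = true)).trans ?_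
  have h2 : ((Finset.range n).filter fun v => v < 2*s+1 ∧ x0f s t v = true)
      = Finset.range (s+1) := by
    ext a
    simp only [mem_filter, mem_range, x0f, decide_eq_true_eq]
    omega
  rw [h2, Finset.card_range]

lemma onesCount_eq {n : ℕ} (x : Fin n → Bool) :
    onesCount x = (univ.filter fun i : Fin n => True ∧ x i = true).card := by
  simp [onesCount]

/-- The number of ones at step `m`. -/
def Ofun (t m : ℕ) : ℕ :=
  if m ≤ 2*t+1 then (if m % 2 = 0 then t+1 else t) else m - t - 1

/-- The number of ones among the first `2s+1` coordinates at step `m`. -/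
def Ffun (s t m : ℕ) : ℕ :=
  if m ≤ 2*t then (if m % 2 = 1 ∧ m < 2*s then s else s+1) else s

lemma key {n s t : ℕ} (hst : s ≤ t) (hn : 2*t+1 ≤ n) :
    ∀ m, m ≤ n → onesCount (Xp n s t m) = Ofun t m ∧
      firstOnes (2*s+1) (Xp n s t m) = Ffun s t m := by
  intro m
  induction m with
  | zero =>
    intro _
    refine ⟨?_, ?_⟩
    · rw [ones_zero hst hn]; simp [Ofun]
    · rw [first_zero hst hn]; simp [Ffun]
  | succ m ih =>
    intro hm1
    have hm : m < n := hm1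
    obtain ⟨hO, hF⟩ := ih (le_of_lt hm)
    set ℓ0 : Fin n := ⟨tau s t m, tau_lt hst hn hm⟩ with hℓ0
    have hagree : ∀ ℓ : Fin n, ℓ ≠ ℓ0 → Xp n s t (m+1) ℓ = Xp n s t m ℓ := by
      intro ℓ hne
      have hsig : sig s t ℓ.val ≠ m := by
        intro hc
        exact hne (Fin.ext (show ℓ.val = tau s t m by rw [← hc, tau_sig hst]))
      unfold Xp; congr 1; simp only [decide_eq_decide]; omega
    have hsℓ0 : sig s t (ℓ0.val) = m := sig_tau hst m
    have hx : Xp n s t m ℓ0 = x0f s t (tau s t m) := by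
      simp [Xp, hsℓ0, hℓ0, sig_tau hst]
    have hy : Xp n s t (m+1) ℓ0 = !(x0f s t (tau s t m)) := by
      simp [Xp, hsℓ0, hℓ0, sig_tau hst]
    have HO : (onesCount (Xp n s t (m+1)) + 1 = onesCount (Xp n s t m)
          ∧ (m % 2 = 0 ∧ m ≤ 2*t))
        ∨ (onesCount (Xp n s t m) + 1 = onesCount (Xp n s t (m+1))
          ∧ ¬(m % 2 = 0 ∧ m ≤ 2*t)) := by
      by_cases hdir : x0f s t (tau s t m) = true
      · left
        refine ⟨?_, (x0f_tau hst m).1 hdir⟩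
        rw [onesCount_eq, onesCount_eq]
        exact flip_card_down (fun _ : Fin n => True) _ _ ℓ0 hagree trivial
          (by rw [hx]; exact hdir) (by rw [hy, hdir]; rfl)
      · right
        have hdir' : x0f s t (tau s t m) = false := by
          cases h : x0f s t (tau s t m) <;> simp_all
        refine ⟨?_, fun hc => hdir ((x0f_tau hst m).2 hc)⟩
        rw [onesCount_eq, onesCount_eq]
        exact flip_card_up (fun _ : Fin n => True) _ _ ℓ0 hagree trivial
          (by rw [hx]; exact hdir') (by rw [hy, hdir']; rfl)
    have HF : (firstOnes (2*s+1) (Xp n s t (m+1)) = firstOnes (2*s+1) (Xp n s t m)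
          ∧ ¬(m < 2*s ∨ m = 2*t))
        ∨ (firstOnes (2*s+1) (Xp n s t (m+1)) + 1 = firstOnes (2*s+1) (Xp n s t m)
          ∧ (m < 2*s ∨ m = 2*t) ∧ (m % 2 = 0 ∧ m ≤ 2*t))
        ∨ (firstOnes (2*s+1) (Xp n s t m) + 1 = firstOnes (2*s+1) (Xp n s t (m+1))
          ∧ (m < 2*s ∨ m = 2*t) ∧ ¬(m % 2 = 0 ∧ m ≤ 2*t)) := by
      by_cases hin : (ℓ0 : Fin n).val < 2*s+1
      · have hin' : m < 2*s ∨ m = 2*t := (tau_lt_k hst m).1 hin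
        by_cases hdir : x0f s t (tau s t m) = true
        · right; left
          refine ⟨?_, hin', (x0f_tau hst m).1 hdir⟩
          exact flip_card_down (fun i : Fin n => i.val < 2*s+1) _ _ ℓ0 hagree hin
            (by rw [hx]; exact hdir) (by rw [hy, hdir]; rfl)
        · right; right
          have hdir' : x0f s t (tau s t m) = false := by
            cases h : x0f s t (tau s t m) <;> simp_all
          refine ⟨?_, hin', fun hc => hdir ((x0f_tau hst m).2 hc)⟩
          exact flip_card_up (fun i : Fin n => i.val < 2*s+1) _ _ ℓ0 hagree hin
            (by rw [hx]; exact hdir') (by rw [hy, hdir']; rfl)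
      · left
        refine ⟨?_, fun hc => hin ((tau_lt_k hst m).2 hc)⟩
        exact flip_card_none (fun i : Fin n => i.val < 2*s+1) _ _ ℓ0 hagree hin
    constructor
    · unfold Ofun at hO ⊢
      rcases HO with ⟨e, h1, h2⟩ | ⟨e, h12⟩ <;> split_ifs at * <;> omega
    · unfold Ffun at hF ⊢
      rcases HF with ⟨e, h1⟩ | ⟨e, h1, h2⟩ | ⟨e, h1, h2⟩ <;> split_ifs at * <;> omega

/-- For `k` odd with `0 < k ≤ 2t+1 ≤ n`, there is a `(t+1)`-geodesic jumping at least
`2t+1` times in `maj_t(k)` whose last point has colour `0`; in particular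
`inst (maj_t(k)) ≥ 2t+1`. -/
theorem maj_geq (n t k : ℕ) (hodd : Odd k) (hk : 0 < k) (hk2t : k ≤ 2 * t + 1)
    (hn : 2 * t + 1 ≤ n) :
    (∃ P : Fin (n+1) → Fin n → Bool, IsGeodesic P ∧ onesCount (P 0) = t + 1 ∧
      2 * t + 1 ≤ jumps (maj t k) P ∧ maj t k (P (Fin.last n)) = false) ∧
    2 * t + 1 ≤ inst (maj (n := n) t k) := by
  obtain ⟨s, hkk⟩ := hodd
  have hkk : k = 2*s+1 := by omega
  have hst : s ≤ t := by omega
  clear hk hk2t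
  set P : Fin (n+1) → Fin n → Bool := fun j => Xp n s t j.val with hP
  -- colour facts
  have colour_odd : ∀ m, m ≤ n → m % 2 = 1 → m ≤ 2*t+1 → maj t k (Xp n s t m) = false := by
    intro m hmn h1 h2
    have hO := (key hst hn m hmn).1
    have hle : onesCount (Xp n s t m) ≤ t := by
      unfold Ofun at hO; split_ifs at hO <;> omega
    unfold maj; rw [if_pos hle]
  have colour_even : ∀ m, m ≤ n → m % 2 = 0 → m ≤ 2*t → maj t k (Xp n s t m) = true := by
    intro m hmn h1 h2
    obtain ⟨hO, hF⟩ := key hst hn m hmn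
    have hO' : onesCount (Xp n s t m) = t+1 := by
      unfold Ofun at hO; split_ifs at hO <;> omega
    have hF' : firstOnes k (Xp n s t m) = s+1 := by
      rw [hkk]; unfold Ffun at hF; split_ifs at hF <;> omega
    unfold maj
    rw [if_neg (by omega)]
    by_cases hz : zerosCount (Xp n s t m) ≤ t
    · rw [if_pos hz]
    · rw [if_neg hz, hF', hkk]
      simp only [decide_eq_true_eq]; omega
  have colour_last : maj t k (Xp n s t n) = false := by
    obtain ⟨hO, hF⟩ := key hst hn n le_rfl
    by_cases hcase : n = 2*t+1
    · exact colour_odd n le_rfl (by omega) (by omega)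
    · have hO' : onesCount (Xp n s t n) = n - t - 1 := by
        unfold Ofun at hO; split_ifs at hO <;> omega
      have hz : zerosCount (Xp n s t n) = t + 1 := by
        have := counts_sum (Xp n s t n); omega
      have hF' : firstOnes k (Xp n s t n) = s := by
        rw [hkk]; unfold Ffun at hF; split_ifs at hF <;> omega
      unfold maj
      rw [if_neg (by omega), if_neg (by omega), hF', hkk]
      simp only [decide_eq_false_iff_not]; omega
  -- the geodesic structure
  have hgeo : IsGeodesic P := by
    refine ⟨⟨fun ℓ => ⟨sig s t ℓ.val, sig_lt hst hn ℓ.isLt⟩,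
        fun m => ⟨tau s t m.val, tau_lt hst hn m.isLt⟩,
        fun ℓ => Fin.ext (tau_sig hst ℓ.val),
        fun m => Fin.ext (sig_tau hst m.val)⟩, ?_⟩
    intro j ℓ
    show Xp n s t (j.succ).val ℓ = _
    have hsucc : (j.succ : Fin (n+1)).val = j.val + 1 := rfl
    have hcast : (j.castSucc : Fin (n+1)).val = j.val := rfl
    by_cases h : sig s t ℓ.val = j.val
    · rw [if_pos (Fin.ext h)]
      show Xp n s t (j.val+1) ℓ = !(Xp n s t j.val ℓ)
      simp [Xp, h]
    · rw [if_neg (fun hc => h (congrArg Fin.val hc))]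
      show Xp n s t (j.val+1) ℓ = Xp n s t j.val ℓ
      unfold Xp; congr 1; simp only [decide_eq_decide]; omega
  -- jumps
  have hjump : ∀ j : Fin n, j.val < 2*t+1 →
      maj t k (P j.succ) ≠ maj t k (P j.castSucc) := by
    intro j hj
    have hjn : j.val < n := j.isLt
    show maj t k (Xp n s t (j.val+1)) ≠ maj t k (Xp n s t j.val)
    by_cases hp : j.val % 2 = 0
    · rw [colour_even j.val (by omega) hp (by omega),
        colour_odd (j.val+1) (by omega) (by omega) (by omega)]
      simp
    · rw [colour_odd j.val (by omega) (by omega) (by omega),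
        colour_even (j.val+1) (by omega) (by omega) (by omega)]
      simp
  have hjcard : 2*t+1 ≤ jumps (maj t k) P := by
    unfold jumps
    have hsub : (univ.filter fun j : Fin n => (fun v => v < 2*t+1) j.val)
        ⊆ univ.filter (fun j : Fin n => maj t k (P j.succ) ≠ maj t k (P j.castSucc)) := by
      intro j hjm
      rw [mem_filter] at hjm ⊢
      exact ⟨hjm.1, hjump j hjm.2⟩
    have hcard : (univ.filter fun j : Fin n => (fun v => v < 2*t+1) j.val).card = 2*t+1 := by
      refine (card_filter_fin n (fun v => v < 2*t+1)).trans ?_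
      have h3 : (Finset.range n).filter (fun v => v < 2*t+1) = Finset.range (2*t+1) := by
        ext a; simp only [mem_filter, mem_range]; omega
      rw [h3, Finset.card_range]
    calc 2*t+1 = _ := hcard.symm
      _ ≤ _ := Finset.card_le_card hsub
  have hP0 : onesCount (P 0) = t + 1 := by
    show onesCount (Xp n s t (0 : Fin (n+1)).val) = t + 1
    rw [Fin.val_zero]
    exact ones_zero hst hn
  have hlast : maj t k (P (Fin.last n)) = false := colour_last
  refine ⟨⟨P, hgeo, hP0, hjcard, hlast⟩, ?_⟩
  have hb : BddAbove {m | ∃ Q : Fin (n+1) → Fin n → Bool,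
      IsGeodesic Q ∧ m = jumps (maj t k) Q} := by
    refine ⟨n, ?_⟩
    rintro m ⟨Q, _, rfl⟩
    unfold jumps
    exact le_trans (Finset.card_filter_le _ _) (by simp)
  exact le_trans hjcard (le_csSup hb ⟨P, hgeo, rfl⟩)
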